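/- Let V be a real separable Hilbert space, let N, m be positive integers, let A be an m×N real matrix, u ∈ V^m, and 0 < τ < 2/‖AᵀA‖₂. Let x* ∈ V^N be a minimizer of F(z) := ‖z‖_{V,1} + (1/2)‖Az − u‖²_{V,2}, set g* := A*(u − Ax*), and let j ∈ {1,…,N} be an index with x*_j = 0 and ‖g*_j‖_V < 1 (strict complementarity). Let (x^k) be generated by the forward-backward iteration x^{k+1} = S_τ(x^k) from any x⁰ ∈ V^N, where S_τ(z)_i := J_τ((z − τA*(Az − u))_i). Then the j-th component converges in finitely many steps: there exists K such that x^k_j = 0 for all k ≥ K. -/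

import Mathlib

open scoped BigOperators
open Filter

variable {V : Type*}

noncomputable def mnorm1 [NormedAddCommGroup V] {N : ℕ} (z : Fin N → V) : ℝ := ∑ j, ‖z j‖

noncomputable def mnorm2 [NormedAddCommGroup V] {N : ℕ} (z : Fin N → V) : ℝ :=
  Real.sqrt (∑ j, ‖z j‖ ^ 2)

def matVec [NormedAddCommGroup V] [Module ℝ V] {m N : ℕ}
    (A : Matrix (Fin m) (Fin N) ℝ) (z : Fin N → V) : Fin m → V :=
  fun i => ∑ j, A i j • z j

def matVecT [NormedAddCommGroup V] [Module ℝ V] {m N : ℕ}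
    (A : Matrix (Fin m) (Fin N) ℝ) (v : Fin m → V) : Fin N → V :=
  fun j => ∑ i, A i j • v i

def IsSparse [Zero V] {N : ℕ} (s : ℕ) (z : Fin N → V) : Prop :=
  ∃ S : Finset (Fin N), S.card ≤ s ∧ ∀ j ∉ S, z j = 0

def restrict [Zero V] {N : ℕ} (S : Finset (Fin N)) (z : Fin N → V) : Fin N → V :=
  fun j => if j ∈ S then z j else 0

noncomputable def softThresh [NormedAddCommGroup V] [Module ℝ V] (τ : ℝ) (x : V) : V :=
  (max (‖x‖ - τ) 0 / ‖x‖) • x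

noncomputable def Sop [NormedAddCommGroup V] [Module ℝ V] {m N : ℕ}
    (τ : ℝ) (A : Matrix (Fin m) (Fin N) ℝ) (u : Fin m → V) (z : Fin N → V) : Fin N → V :=
  fun j => softThresh τ ((z - τ • matVecT A (matVec A z - u)) j)

noncomputable def specNorm {N : ℕ} (M : Matrix (Fin N) (Fin N) ℝ) : ℝ :=
  ‖(Matrix.toEuclideanCLM (𝕜 := ℝ) M : EuclideanSpace ℝ (Fin N) →L[ℝ] EuclideanSpace ℝ (Fin N))‖

open scoped RealInnerProductSpace

section AuxST
variable [NormedAddCommGroup V] [InnerProductSpace ℝ V]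

lemma softThresh_of_le {τ : ℝ} {y : V} (h : ‖y‖ ≤ τ) : softThresh τ y = 0 := by
  unfold softThresh
  rw [max_eq_right (by linarith), zero_div, zero_smul]

lemma prox_key {τ : ℝ} (hτ : 0 ≤ τ) (y z : V) :
    τ * ‖softThresh τ y‖ + ⟪z - softThresh τ y, y - softThresh τ y⟫ ≤ τ * ‖z‖ := by
  rcases le_or_gt ‖y‖ τ with h | h
  · rw [softThresh_of_le h]
    simp only [norm_zero, mul_zero, zero_add, sub_zero]
    calc ⟪z, y⟫ ≤ ‖z‖ * ‖y‖ := real_inner_le_norm z y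
      _ ≤ ‖z‖ * τ := by nlinarith [norm_nonneg z]
      _ = τ * ‖z‖ := mul_comm _ _
  · have hy0 : (0:ℝ) < ‖y‖ := lt_of_le_of_lt hτ h
    have hmax : max (‖y‖ - τ) 0 = ‖y‖ - τ := max_eq_left (by linarith)
    have hp : softThresh τ y = ((‖y‖ - τ) / ‖y‖) • y := by rw [softThresh, hmax]
    have hyp : y - softThresh τ y = (τ / ‖y‖) • y := by
      rw [hp]
      nth_rw 1 [← one_smul ℝ y]
      rw [← sub_smul]
      congr 1
      field_simp; ring
    have hnp : ‖softThresh τ y‖ = ‖y‖ - τ := by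
      rw [hp, norm_smul, Real.norm_eq_abs, abs_of_nonneg (div_nonneg (by linarith) hy0.le),
        div_mul_cancel₀]
      exact hy0.ne'
    rw [hyp, hnp]
    have h1 : ⟪z - softThresh τ y, (τ / ‖y‖) • y⟫
        = (τ / ‖y‖) * (⟪z, y⟫ - ⟪softThresh τ y, y⟫) := by
      rw [real_inner_smul_right, inner_sub_left]
    have h2 : ⟪softThresh τ y, y⟫ = ((‖y‖ - τ) / ‖y‖) * (‖y‖ * ‖y‖) := by
      rw [hp, real_inner_smul_left, real_inner_self_eq_norm_mul_norm]
    have h3 : ⟪z, y⟫ ≤ ‖z‖ * ‖y‖ := real_inner_le_norm z y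
    rw [h1, h2]
    have e1 : ((‖y‖ - τ) / ‖y‖) * (‖y‖ * ‖y‖) = (‖y‖ - τ) * ‖y‖ := by
      field_simp
    rw [e1]
    have hd : (0:ℝ) < τ / ‖y‖ ∨ τ / ‖y‖ = 0 := by
      rcases eq_or_lt_of_le hτ with h' | h'
      · right; rw [← h']; simp
      · left; positivity
    have key : (τ / ‖y‖) * ⟪z, y⟫ ≤ (τ / ‖y‖) * (‖z‖ * ‖y‖) := by
      rcases hd with h' | h'
      · exact mul_le_mul_of_nonneg_left h3 h'.le
      · simp [h']
    have e2 : (τ / ‖y‖) * (‖z‖ * ‖y‖) = τ * ‖z‖ := by field_simp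
    have e3 : (τ / ‖y‖) * ((‖y‖ - τ) * ‖y‖) = τ * (‖y‖ - τ) := by field_simp
    have e4 := mul_sub (τ / ‖y‖) (⟪z, y⟫) ((‖y‖ - τ) * ‖y‖)
    linarith [key]

lemma norm_sub_expand (a b c : V) :
    ‖a - c‖^2 = ‖a - b‖^2 + 2 * ⟪a - b, b - c⟫ + ‖b - c‖^2 := by
  have h : a - c = (a - b) + (b - c) := by abel
  rw [h, norm_add_sq_real]

lemma prox_quad {τ : ℝ} (hτ : 0 ≤ τ) (y z : V) :
    τ * ‖softThresh τ y‖ + (1/2) * ‖softThresh τ y - y‖^2 + (1/2) * ‖z - softThresh τ y‖^2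
      ≤ τ * ‖z‖ + (1/2) * ‖z - y‖^2 := by
  have key := prox_key hτ y z
  set p := softThresh τ y with hp
  have expand := norm_sub_expand z p y
  have hsym : ⟪z - p, p - y⟫ = - ⟪z - p, y - p⟫ := by
    rw [← inner_neg_right]; congr 1; abel
  have hnorm : ‖p - y‖^2 = ‖y - p‖^2 := by rw [← norm_neg]; congr 1; abel
  linarith

end AuxST

section AuxMat
variable [NormedAddCommGroup V] [InnerProductSpace ℝ V] {N m : ℕ}

lemma matVec_sub (A : Matrix (Fin m) (Fin N) ℝ) (z w : Fin N → V) :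
    matVec A (z - w) = matVec A z - matVec A w := by
  funext i
  simp [matVec, smul_sub, Finset.sum_sub_distrib]

lemma adj_sum (A : Matrix (Fin m) (Fin N) ℝ) (d : Fin N → V) (w : Fin m → V) :
    ∑ i, ⟪matVec A d i, w i⟫ = ∑ j, ⟪d j, matVecT A w j⟫ := by
  simp only [matVec, matVecT, sum_inner, inner_sum, real_inner_smul_left,
    real_inner_smul_right]
  rw [Finset.sum_comm]

lemma f_expand (A : Matrix (Fin m) (Fin N) ℝ) (u : Fin m → V) (z z' : Fin N → V) :
    (1/2) * ∑ i, ‖(matVec A z' - u) i‖^2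
      = (1/2) * ∑ i, ‖(matVec A z - u) i‖^2
        + ∑ j, ⟪z' j - z j, matVecT A (matVec A z - u) j⟫
        + (1/2) * ∑ i, ‖matVec A (z' - z) i‖^2 := by
  have hpt : ∀ i, (matVec A z' - u) i = (matVec A z - u) i + matVec A (z' - z) i := by
    intro i
    rw [matVec_sub]
    simp only [Pi.sub_apply]
    abel
  have hsum : ∑ i, ‖(matVec A z' - u) i‖^2
      = ∑ i, (‖(matVec A z - u) i‖^2 + 2 * ⟪(matVec A z - u) i, matVec A (z' - z) i⟫
          + ‖matVec A (z' - z) i‖^2) := by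
    refine Finset.sum_congr rfl fun i _ => ?_
    rw [hpt i, norm_add_sq_real]
  have hcross : ∑ i, ⟪(matVec A z - u) i, matVec A (z' - z) i⟫
      = ∑ j, ⟪(z' - z) j, matVecT A (matVec A z - u) j⟫ := by
    rw [← adj_sum]
    exact Finset.sum_congr rfl fun i _ => real_inner_comm _ _
  have hcross2 : ∀ j, ⟪(z' - z) j, matVecT A (matVec A z - u) j⟫
      = ⟪z' j - z j, matVecT A (matVec A z - u) j⟫ := fun j => rfl
  simp only [hcross2] at hcross
  rw [hsum, Finset.sum_add_distrib, Finset.sum_add_distrib, ← Finset.mul_sum, hcross]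
  ring

lemma mulVec_sq_le (A : Matrix (Fin m) (Fin N) ℝ) (v : Fin N → ℝ) :
    ∑ i, (A.mulVec v i)^2 ≤ specNorm (A.transpose * A) * ∑ j, (v j)^2 := by
  classical
  set w : EuclideanSpace ℝ (Fin N) := (WithLp.equiv 2 _).symm v with hw
  set T := (Matrix.toEuclideanCLM (𝕜 := ℝ) (A.transpose * A)) with hT
  have hTw : T w = (WithLp.equiv 2 _).symm ((A.transpose * A).mulVec v) := by
    rw [hT, hw, WithLp.equiv_symm_apply, Matrix.toEuclideanCLM_toLp]
  have h1 : ⟪w, T w⟫ = ∑ i, (A.mulVec v i)^2 := by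
    rw [hTw]
    rw [PiLp.inner_apply]
    have : ∀ j, ⟪w j, ((WithLp.equiv 2 (Fin N → ℝ)).symm ((A.transpose * A).mulVec v)) j⟫
        = v j * ((A.transpose * A).mulVec v j) := by
      intro j; rw [real_inner_comm]; rfl
    simp only [this]
    have expand : ∀ j, (A.transpose * A).mulVec v j = ∑ i, A i j * (A.mulVec v i) := by
      intro j
      rw [← Matrix.mulVec_mulVec]
      simp [Matrix.mulVec, dotProduct, Matrix.transpose_apply]
    simp only [expand]
    calc ∑ x, v x * ∑ i, A i x * A.mulVec v i
        = ∑ x, ∑ i, (A i x * v x) * A.mulVec v i := by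
          refine Finset.sum_congr rfl fun x _ => ?_
          rw [Finset.mul_sum]; exact Finset.sum_congr rfl fun i _ => by ring
      _ = ∑ i, ∑ x, (A i x * v x) * A.mulVec v i := Finset.sum_comm
      _ = ∑ i, (A.mulVec v i)^2 := by
          refine Finset.sum_congr rfl fun i _ => ?_
          rw [← Finset.sum_mul]
          have hv : ∑ x, A i x * v x = A.mulVec v i := by
            simp [Matrix.mulVec, dotProduct]
          rw [hv]; ring
  have h2 : ⟪w, T w⟫ ≤ specNorm (A.transpose * A) * ∑ j, (v j)^2 := by
    have hb : ⟪w, T w⟫ ≤ ‖w‖ * ‖T w‖ := real_inner_le_norm _ _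
    have hb2 : ‖T w‖ ≤ specNorm (A.transpose * A) * ‖w‖ := T.le_opNorm w
    have hwn : ‖w‖^2 = ∑ j, (v j)^2 := by
      rw [← real_inner_self_eq_norm_sq, PiLp.inner_apply]
      exact Finset.sum_congr rfl fun j _ => by
        rw [show w j = v j from rfl, RCLike.inner_apply]; simp [sq]
    calc ⟪w, T w⟫ ≤ ‖w‖ * ‖T w‖ := hb
      _ ≤ ‖w‖ * (specNorm (A.transpose * A) * ‖w‖) :=
          mul_le_mul_of_nonneg_left hb2 (norm_nonneg w)
      _ = specNorm (A.transpose * A) * ‖w‖^2 := by ring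
      _ = specNorm (A.transpose * A) * ∑ j, (v j)^2 := by rw [hwn]
  linarith [h1 ▸ h2]

omit [InnerProductSpace ℝ V] in
lemma specNorm_nonneg (M : Matrix (Fin N) (Fin N) ℝ) : 0 ≤ specNorm M := norm_nonneg _

end AuxMat

section OpB
variable [NormedAddCommGroup V] [InnerProductSpace ℝ V] [CompleteSpace V] {N m : ℕ}

lemma norm_sq_hasSum {ι : Type*} (b : HilbertBasis ι ℝ V) (x : V) :
    HasSum (fun ℓ : ι => ⟪b ℓ, x⟫^2) (‖x‖^2) := by
  have h := b.hasSum_inner_mul_inner x x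
  rw [real_inner_self_eq_norm_sq] at h
  refine h.congr_fun fun ℓ => ?_
  rw [real_inner_comm x (b ℓ), sq]

lemma opBound (A : Matrix (Fin m) (Fin N) ℝ) (d : Fin N → V) :
    ∑ i, ‖matVec A d i‖^2 ≤ specNorm (A.transpose * A) * ∑ j, ‖d j‖^2 := by
  obtain ⟨w, b, -⟩ := exists_hilbertBasis ℝ V
  have hLHS : HasSum (fun ℓ : w => ∑ i, ⟪b ℓ, matVec A d i⟫^2)
      (∑ i, ‖matVec A d i‖^2) :=
    hasSum_sum (fun i _ => norm_sq_hasSum b (matVec A d i))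
  have hRHS : HasSum (fun ℓ : w => specNorm (A.transpose * A) * ∑ j, ⟪b ℓ, d j⟫^2)
      (specNorm (A.transpose * A) * ∑ j, ‖d j‖^2) :=
    (hasSum_sum (fun j _ => norm_sq_hasSum b (d j))).mul_left _
  refine hasSum_le (fun ℓ => ?_) hLHS hRHS
  have hcoef : ∀ i, ⟪b ℓ, matVec A d i⟫ = A.mulVec (fun j => ⟪b ℓ, d j⟫) i := by
    intro i
    simp [matVec, inner_sum, real_inner_smul_right, Matrix.mulVec, dotProduct]
  simp only [hcoef]
  exact mulVec_sq_le A _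

end OpB

set_option maxHeartbeats 2000000 in
/-- finite convergence of components satisfying strict complementarity:
if `x*` minimizes `F`, `x*_j = 0` and `‖(A*(u − Ax*))_j‖ < 1`, then the forward-backward
iterates satisfy `x^k_j = 0` for all sufficiently large `k`. -/
theorem finite_convergence_of_strict_complementarity
    [NormedAddCommGroup V] [InnerProductSpace ℝ V] [CompleteSpace V]
    [TopologicalSpace.SeparableSpace V]
    {N m : ℕ} (hN : 0 < N) (hm : 0 < m)
    (A : Matrix (Fin m) (Fin N) ℝ) (u : Fin m → V) (τ : ℝ)
    (hτ0 : 0 < τ) (hτ : τ < 2 / specNorm (A.transpose * A))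
    (xstar : Fin N → V)
    (hmin : ∀ z : Fin N → V,
        mnorm1 xstar + (1 / 2) * mnorm2 (matVec A xstar - u) ^ 2 ≤
          mnorm1 z + (1 / 2) * mnorm2 (matVec A z - u) ^ 2)
    (j : Fin N) (hxj : xstar j = 0)
    (hgj : ‖matVecT A (u - matVec A xstar) j‖ < 1)
    (x : ℕ → Fin N → V) (hiter : ∀ k, x (k + 1) = Sop τ A u (x k)) :
    ∃ K : ℕ, ∀ k ≥ K, x k j = 0 := by
  classical
  set L := specNorm (A.transpose * A) with hL
  have hL0 : 0 ≤ L := specNorm_nonneg _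
  have hLpos : 0 < L := by
    rcases eq_or_lt_of_le hL0 with h | h
    · exfalso
      rw [← h] at hτ
      simp only [div_zero] at hτ
      linarith
    · exact h
  have hτL : τ * L < 2 := by
    rw [lt_div_iff₀ hLpos] at hτ
    linarith
  set c : ℝ := 1/τ - L/2 with hc
  have hτc : τ * c = 1 - τ * L / 2 := by
    rw [hc]; field_simp
  have hcpos : 0 < c := by
    rw [hc]
    have h1 : L/2 < 1/τ := by
      rw [div_lt_div_iff₀ (by norm_num) hτ0]
      linarith
    linarith
  -- objective pieces
  set f : (Fin N → V) → ℝ := fun z => (1/2) * ∑ i, ‖(matVec A z - u) i‖^2 with hfd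
  set F : (Fin N → V) → ℝ := fun z => mnorm1 z + f z with hFd
  have hf0 : ∀ z, 0 ≤ f z := by
    intro z
    exact mul_nonneg (by norm_num) (Finset.sum_nonneg fun i _ => sq_nonneg _)
  have hm1 : ∀ z : Fin N → V, 0 ≤ mnorm1 z :=
    fun z => Finset.sum_nonneg fun j' _ => norm_nonneg _
  have hcomp : ∀ (z : Fin N → V) (j' : Fin N), ‖z j'‖ ≤ mnorm1 z := by
    intro z j'
    exact Finset.single_le_sum (fun i _ => norm_nonneg (z i)) (Finset.mem_univ j')
  have hmin' : ∀ z, F xstar ≤ F z := by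
    intro z
    have h := hmin z
    have e : ∀ w : Fin m → V, mnorm2 w ^ 2 = ∑ i, ‖w i‖^2 := fun w =>
      Real.sq_sqrt (Finset.sum_nonneg fun i _ => sq_nonneg _)
    rw [e, e] at h
    simpa [hFd, hfd] using h
  set g : (Fin N → V) → (Fin N → V) := fun z => matVecT A (matVec A z - u) with hgd
  set gs : Fin N → V := matVecT A (u - matVec A xstar) with hgsd
  have hgs_g : ∀ j', gs j' = - g xstar j' := by
    intro j'
    simp only [hgsd, hgd, matVecT]
    rw [← Finset.sum_neg_distrib]
    refine Finset.sum_congr rfl fun i _ => ?_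
    simp [Pi.sub_apply, smul_sub]
  have hfe : ∀ z z', f z' = f z + ∑ j', ⟪z' j' - z j', g z j'⟫
      + (1/2) * ∑ i, ‖matVec A (z' - z) i‖^2 := fun z z' => f_expand A u z z'
  -- iteration basics
  set y : ℕ → Fin N → V := fun k j' => x k j' - τ • g (x k) j' with hyd
  have hx1 : ∀ k j', x (k+1) j' = softThresh τ (y k j') := by
    intro k j'
    rw [hiter k]
    rfl
  set d : ℕ → Fin N → V := fun k j' => x (k+1) j' - x k j' with hdd
  set D : ℕ → ℝ := fun k => ∑ j', ‖d k j'‖^2 with hDd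
  set ε : ℕ → ℝ := fun k => ∑ j', ‖d k j'‖ with hεd
  have hD0 : ∀ k, 0 ≤ D k := fun k => Finset.sum_nonneg fun j' _ => sq_nonneg _
  have hε0 : ∀ k, 0 ≤ ε k := fun k => Finset.sum_nonneg fun j' _ => norm_nonneg _
  -- summed prox inequality
  have hproxZ : ∀ k (z : Fin N → V),
      τ * mnorm1 (x (k+1)) + (1/2) * ∑ j', ‖x (k+1) j' - y k j'‖^2
        + (1/2) * ∑ j', ‖z j' - x (k+1) j'‖^2
      ≤ τ * mnorm1 z + (1/2) * ∑ j', ‖z j' - y k j'‖^2 := by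
    intro k z
    have h2 : ∀ j', τ * ‖x (k+1) j'‖ + (1/2) * ‖x (k+1) j' - y k j'‖^2
        + (1/2) * ‖z j' - x (k+1) j'‖^2
        ≤ τ * ‖z j'‖ + (1/2) * ‖z j' - y k j'‖^2 := by
      intro j'
      rw [hx1 k j']
      exact prox_quad hτ0.le (y k j') (z j')
    have hsum := Finset.sum_le_sum (fun j' (_ : j' ∈ Finset.univ) => h2 j')
    simpa only [mnorm1, Finset.mul_sum, ← Finset.sum_add_distrib] using hsum
  -- sufficient decrease
  have hdec : ∀ k, F (x (k+1)) + c * D k ≤ F (x k) := by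
    intro k
    have hp := hproxZ k (x k)
    -- expand the two quadratic terms
    have e1 : ∀ j', x (k+1) j' - y k j' = d k j' + τ • g (x k) j' := by
      intro j'
      simp only [hyd, hdd]
      abel
    have e2 : ∀ j', x k j' - y k j' = τ • g (x k) j' := by
      intro j'
      simp only [hyd]
      abel
    have e3 : ∀ j', ‖x (k+1) j' - y k j'‖^2
        = ‖d k j'‖^2 + 2 * (τ * ⟪d k j', g (x k) j'⟫) + τ^2 * ‖g (x k) j'‖^2 := by
      intro j'
      rw [e1 j', norm_add_sq_real, real_inner_smul_right, norm_smul, Real.norm_eq_abs,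
        abs_of_pos hτ0, mul_pow]
    have e4 : ∀ j', ‖x k j' - y k j'‖^2 = τ^2 * ‖g (x k) j'‖^2 := by
      intro j'
      rw [e2 j', norm_smul, Real.norm_eq_abs, abs_of_pos hτ0, mul_pow]
    have e5 : ∀ j', ‖x k j' - x (k+1) j'‖^2 = ‖d k j'‖^2 := by
      intro j'
      rw [show x k j' - x (k+1) j' = -(d k j') by simp only [hdd]; abel, norm_neg]
    simp only [e3, e4, e5] at hp
    rw [Finset.sum_add_distrib, Finset.sum_add_distrib] at hp
    -- hp : τ‖x⁺‖₁ + ½(D k + 2τΣ⟪d,g⟫ + τ²Σ‖g‖²) + ½ D k ≤ τ‖xk‖₁ + ½ τ²Σ‖g‖²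
    have hip : ∑ j', 2 * (τ * ⟪d k j', g (x k) j'⟫) = 2 * τ * ∑ j', ⟪d k j', g (x k) j'⟫ := by
      rw [Finset.mul_sum]
      exact Finset.sum_congr rfl fun j' _ => by ring
    have hgs : ∑ j', τ^2 * ‖g (x k) j'‖^2 = τ^2 * ∑ j', ‖g (x k) j'‖^2 := by
      rw [Finset.mul_sum]
    rw [hip, hgs] at hp
    -- f expansion
    have hfexp : f (x (k+1)) = f (x k) + ∑ j', ⟪d k j', g (x k) j'⟫
        + (1/2) * ∑ i, ‖matVec A (x (k+1) - x k) i‖^2 := by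
      have := hfe (x k) (x (k+1))
      simpa only [hdd] using this
    have hop : ∑ i, ‖matVec A (x (k+1) - x k) i‖^2 ≤ L * D k := by
      have := opBound A (x (k+1) - x k)
      have hDe : ∑ j', ‖(x (k+1) - x k) j'‖^2 = D k := by
        simp only [hDd, hdd, Pi.sub_apply]
      rw [hDe] at this
      exact this
    -- combine, all scaled by τ
    have key : τ * F (x (k+1)) + τ * c * D k ≤ τ * F (x k) := by
      have h1 : τ * mnorm1 (x (k+1)) ≤ τ * mnorm1 (x k)
          - τ * ∑ j', ⟪d k j', g (x k) j'⟫ - D k := by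
        simp only [hDd] at hp ⊢
        linarith
      have h2 : τ * f (x (k+1)) ≤ τ * f (x k) + τ * ∑ j', ⟪d k j', g (x k) j'⟫
          + τ * L / 2 * D k := by
        rw [hfexp]
        have := mul_le_mul_of_nonneg_left hop (le_of_lt hτ0)
        simp only [hDd] at this ⊢
        nlinarith
      simp only [hFd]
      rw [hτc]
      linarith
    have := (mul_le_mul_iff_right₀ hτ0).mp (by linarith : τ * (F (x (k+1)) + c * D k) ≤ τ * F (x k))
    exact this
  -- monotonicity of F along iterates
  have hmono : ∀ k l, k ≤ l → F (x l) ≤ F (x k) := by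
    intro k l hkl
    induction l with
    | zero => simp_all
    | succ n ih =>
      rcases Nat.lt_or_ge k (n+1) with h | h
      · have h1 := ih (Nat.lt_succ_iff.mp h)
        have h2 := hdec n
        have := mul_nonneg hcpos.le (hD0 n)
        linarith
      · have : k = n + 1 := le_antisymm hkl h
        rw [this]
  -- telescoping gives summability of D
  have hDsum : ∀ K : ℕ, ∑ k ∈ Finset.range K, D k ≤ (F (x 0) - F xstar) / c := by
    intro K
    have htel : ∀ K : ℕ, c * ∑ k ∈ Finset.range K, D k ≤ F (x 0) - F (x K) := by
      intro K
      induction K with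
      | zero => simp
      | succ n ih =>
        rw [Finset.sum_range_succ, mul_add]
        have := hdec n
        linarith
    have h1 := htel K
    have h2 := hmin' (x K)
    rw [← sub_nonneg] at h2
    rw [le_div_iff₀ hcpos]
    linarith [h1, h2]
  have hDsummable : Summable D := by
    apply summable_of_sum_range_le hD0 hDsum
  have hDto : Filter.Tendsto D atTop (nhds 0) := hDsummable.tendsto_atTop_zero
  -- each component of d tends to 0, hence ε → 0
  have hdcomp : ∀ k j', ‖d k j'‖ ≤ Real.sqrt (D k) := by
    intro k j'
    rw [show ‖d k j'‖ = Real.sqrt (‖d k j'‖^2) by rw [Real.sqrt_sq (norm_nonneg _)]]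
    apply Real.sqrt_le_sqrt
    exact Finset.single_le_sum (fun i _ => sq_nonneg ‖d k i‖) (Finset.mem_univ j')
  have hsqrtD : Filter.Tendsto (fun k => Real.sqrt (D k)) atTop (nhds 0) := by
    have := (Real.continuous_sqrt.tendsto 0).comp hDto
    rw [Real.sqrt_zero] at this; exact this
  have hεto : Filter.Tendsto ε atTop (nhds 0) := by
    have hbound : ∀ k, ε k ≤ (N : ℝ) * Real.sqrt (D k) := by
      intro k
      calc ε k = ∑ j', ‖d k j'‖ := rfl
        _ ≤ ∑ _j' : Fin N, Real.sqrt (D k) := Finset.sum_le_sum fun j' _ => hdcomp k j'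
        _ = (N : ℝ) * Real.sqrt (D k) := by simp [Finset.sum_const, Finset.card_univ]
    have hNto : Filter.Tendsto (fun k => (N : ℝ) * Real.sqrt (D k)) atTop (nhds 0) := by
      simpa using hsqrtD.const_mul (N : ℝ)
    exact squeeze_zero hε0 hbound hNto
  -- per-coordinate subgradient optimality condition
  have hsub : ∀ (j' : Fin N) (v : V), ‖xstar j'‖ + ⟪gs j', v - xstar j'⟫ ≤ ‖v‖ := by
    intro j' v
    set dv : V := v - xstar j' with hdv
    set Q : ℝ := (1/2) * ∑ i, ‖A i j' • dv‖^2 with hQ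
    have hQ0 : 0 ≤ Q := mul_nonneg (by norm_num) (Finset.sum_nonneg fun i _ => sq_nonneg _)
    have ht : ∀ t : ℝ, 0 < t → t ≤ 1 →
        0 ≤ (‖v‖ - ‖xstar j'‖ - ⟪gs j', dv⟫) + t * Q := by
      intro t ht0 ht1
      set zt : Fin N → V := Function.update xstar j' (xstar j' + t • dv) with hzt
      have hzt_sub : ∀ j'', zt j'' - xstar j'' = if j'' = j' then t • dv else 0 := by
        intro j''
        by_cases h : j'' = j'
        · subst h; simp [hzt]
        · simp [hzt, Function.update_of_ne h, h]
      have hmz : mnorm1 zt - mnorm1 xstar = ‖xstar j' + t • dv‖ - ‖xstar j'‖ := by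
        have h0 : mnorm1 zt - mnorm1 xstar = ∑ j'', (‖zt j''‖ - ‖xstar j''‖) := by
          rw [mnorm1, mnorm1, ← Finset.sum_sub_distrib]
        rw [h0, Finset.sum_eq_single j']
        · simp [hzt]
        · intro b _ hb
          simp [hzt, Function.update_of_ne hb]
        · simp
      have hinner : ∑ j'', ⟪zt j'' - xstar j'', g xstar j''⟫ = - (t * ⟪gs j', dv⟫) := by
        rw [Finset.sum_eq_single j']
        · rw [hzt_sub j', if_pos rfl, real_inner_smul_left,
            show g xstar j' = - gs j' by rw [hgs_g j']; abel,
            inner_neg_right, real_inner_comm]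
          ring
        · intro b _ hb
          rw [hzt_sub b, if_neg hb, inner_zero_left]
        · simp
      have hquad : ∑ i, ‖matVec A (zt - xstar) i‖^2 = t^2 * (2 * Q) := by
        have hAv : ∀ i, matVec A (zt - xstar) i = t • (A i j' • dv) := by
          intro i
          rw [show matVec A (zt - xstar) i = ∑ j'', A i j'' • (zt j'' - xstar j'') from rfl]
          rw [Finset.sum_eq_single j']
          · rw [hzt_sub j', if_pos rfl, smul_comm]
          · intro b _ hb
            rw [hzt_sub b, if_neg hb, smul_zero]
          · simp
        have : ∀ i, ‖matVec A (zt - xstar) i‖^2 = t^2 * ‖A i j' • dv‖^2 := by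
          intro i
          rw [hAv i, norm_smul, Real.norm_eq_abs, abs_of_pos ht0, mul_pow]
        simp only [this]
        rw [← Finset.mul_sum, hQ]
        ring
      have hfz : f zt - f xstar = - (t * ⟪gs j', dv⟫) + t^2 * Q := by
        rw [hfe xstar zt, hinner, hquad]
        ring
      have hF := hmin' zt
      have hFz : 0 ≤ (mnorm1 zt - mnorm1 xstar) + (f zt - f xstar) := by
        simp only [hFd] at hF
        linarith
      have hconv : ‖xstar j' + t • dv‖ ≤ (1 - t) * ‖xstar j'‖ + t * ‖v‖ := by
        have hrw : xstar j' + t • dv = (1 - t) • xstar j' + t • (xstar j' + dv) := by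
          rw [smul_add, sub_smul, one_smul]
          abel
        have hv : xstar j' + dv = v := by rw [hdv]; abel
        rw [hrw, hv]
        calc ‖(1 - t) • xstar j' + t • v‖ ≤ ‖(1 - t) • xstar j'‖ + ‖t • v‖ := norm_add_le _ _
          _ = (1 - t) * ‖xstar j'‖ + t * ‖v‖ := by
            rw [norm_smul, norm_smul, Real.norm_eq_abs, Real.norm_eq_abs,
              abs_of_nonneg (by linarith), abs_of_pos ht0]
      have hstep : 0 ≤ t * ((‖v‖ - ‖xstar j'‖ - ⟪gs j', dv⟫) + t * Q) := by
        rw [hmz, hfz] at hFz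
        nlinarith
      by_contra hcon
      push_neg at hcon
      nlinarith
    by_contra hScon
    push_neg at hScon
    set S : ℝ := ‖v‖ - ‖xstar j'‖ - ⟪gs j', dv⟫ with hSdef
    have hSneg : S < 0 := by rw [hSdef]; linarith
    set t0 : ℝ := min 1 ((-S)/(2*(Q+1))) with ht0d
    have hfrac : 0 < (-S)/(2*(Q+1)) := div_pos (by linarith) (by linarith)
    have ht00 : 0 < t0 := lt_min one_pos hfrac
    have ht01 : t0 ≤ 1 := min_le_left _ _
    have hkey := ht t0 ht00 ht01
    have htQ : t0 * Q < -S := by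
      calc t0 * Q ≤ ((-S)/(2*(Q+1))) * Q :=
            mul_le_mul_of_nonneg_right (min_le_right _ _) hQ0
        _ < -S := by
            rw [div_mul_eq_mul_div, div_lt_iff₀ (by linarith)]
            nlinarith
    linarith
  -- error bound
  have hEB : ∀ z : Fin N → V,
      (1 - ‖gs j‖) * ‖z j‖ + (1/2) * ∑ i, ‖matVec A (z - xstar) i‖^2 ≤ F z - F xstar
      ∧ (1 - ‖gs j‖) * ‖z j‖ ≤ F z - F xstar
      ∧ ∑ i, ‖matVec A (z - xstar) i‖^2 ≤ 2 * (F z - F xstar) := by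
    intro z
    have hgsum : ∑ j', ⟪z j' - xstar j', g xstar j'⟫
        = - ∑ j', ⟪gs j', z j' - xstar j'⟫ := by
      rw [← Finset.sum_neg_distrib]
      refine Finset.sum_congr rfl fun j' _ => ?_
      rw [show g xstar j' = - gs j' by rw [hgs_g j']; abel, inner_neg_right, real_inner_comm]
    have hterms : ∀ j', 0 ≤ ‖z j'‖ - ‖xstar j'‖ - ⟪gs j', z j' - xstar j'⟫ := fun j' => by
      have := hsub j' (z j'); linarith
    have hj2 : (1 - ‖gs j‖) * ‖z j‖ ≤ ‖z j‖ - ‖xstar j‖ - ⟪gs j, z j - xstar j⟫ := by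
      rw [hxj]
      simp only [norm_zero, sub_zero]
      have h1 : ⟪gs j, z j⟫ ≤ ‖gs j‖ * ‖z j‖ := real_inner_le_norm _ _
      nlinarith [norm_nonneg (z j)]
    have hsumj : (1 - ‖gs j‖) * ‖z j‖
        ≤ ∑ j', (‖z j'‖ - ‖xstar j'‖ - ⟪gs j', z j' - xstar j'⟫) :=
      le_trans hj2 (Finset.single_le_sum (fun j'' _ => hterms j'') (Finset.mem_univ j))
    have hms : ∑ j', (‖z j'‖ - ‖xstar j'‖ - ⟪gs j', z j' - xstar j'⟫)
        = mnorm1 z - mnorm1 xstar - ∑ j', ⟪gs j', z j' - xstar j'⟫ := by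
      rw [mnorm1, mnorm1, Finset.sum_sub_distrib, Finset.sum_sub_distrib]
    have hFz : F z - F xstar = (mnorm1 z - mnorm1 xstar)
        - ∑ j', ⟪gs j', z j' - xstar j'⟫
        + (1/2) * ∑ i, ‖matVec A (z - xstar) i‖^2 := by
      simp only [hFd]
      rw [hfe xstar z, hgsum]
      ring
    have hq2 : 0 ≤ (1/2) * ∑ i, ‖matVec A (z - xstar) i‖^2 :=
      mul_nonneg (by norm_num) (Finset.sum_nonneg fun i _ => sq_nonneg _)
    have hjn : 0 ≤ (1 - ‖gs j‖) * ‖z j‖ := mul_nonneg (by linarith) (norm_nonneg _)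
    refine ⟨?_, ?_, ?_⟩
    · rw [hFz, ← hms]
      linarith [hsumj]
    · rw [hFz, ← hms]
      linarith [hsumj]
    · rw [hFz, ← hms]
      have h0 : 0 ≤ ∑ j', (‖z j'‖ - ‖xstar j'‖ - ⟪gs j', z j' - xstar j'⟫) :=
        Finset.sum_nonneg fun j' _ => hterms j'
      linarith
  -- uniform bound on iterate components
  have hFb : ∀ k, F (x k) ≤ F (x 0) := fun k => hmono 0 k (Nat.zero_le k)
  set C2 : ℝ := 2 * F (x 0) with hC2
  have hbnd : ∀ k j', ‖xstar j' - x (k+1) j'‖ ≤ C2 := by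
    intro k j'
    have h1 : mnorm1 xstar ≤ F xstar := by
      simp only [hFd]
      linarith [hf0 xstar]
    have h2 : mnorm1 (x (k+1)) ≤ F (x (k+1)) := by
      simp only [hFd]
      linarith [hf0 (x (k+1))]
    calc ‖xstar j' - x (k+1) j'‖ ≤ ‖xstar j'‖ + ‖x (k+1) j'‖ := norm_sub_le _ _
      _ ≤ mnorm1 xstar + mnorm1 (x (k+1)) := add_le_add (hcomp _ _) (hcomp _ _)
      _ ≤ C2 := by
          rw [hC2]
          linarith [hmin' (x 0), hFb (k+1)]
  -- crude entrywise matrix bounds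
  set Amax : ℝ := 1 + ∑ i, ∑ j', |A i j'| with hAmax
  have hAmax0 : 0 < Amax := by
    rw [hAmax]
    have : (0:ℝ) ≤ ∑ i, ∑ j', |A i j'| :=
      Finset.sum_nonneg fun i _ => Finset.sum_nonneg fun j' _ => abs_nonneg _
    linarith
  have hAe : ∀ i j', |A i j'| ≤ Amax := by
    intro i j'
    have h1 : |A i j'| ≤ ∑ j'', |A i j''| :=
      Finset.single_le_sum (f := fun j'' => |A i j''|) (fun j'' _ => abs_nonneg _)
        (Finset.mem_univ j')
    have h2 : ∑ j'', |A i j''| ≤ ∑ i', ∑ j'', |A i' j''| :=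
      Finset.single_le_sum (f := fun i' => ∑ j'', |A i' j''|)
        (fun i' _ => Finset.sum_nonneg fun j'' _ => abs_nonneg _) (Finset.mem_univ i)
    rw [hAmax]
    linarith
  have hAv : ∀ k i, ‖matVec A (d k) i‖ ≤ Amax * ε k := by
    intro k i
    calc ‖matVec A (d k) i‖ = ‖∑ j', A i j' • d k j'‖ := rfl
      _ ≤ ∑ j', ‖A i j' • d k j'‖ := norm_sum_le _ _
      _ = ∑ j', |A i j'| * ‖d k j'‖ := by
          refine Finset.sum_congr rfl fun j' _ => ?_
          rw [norm_smul, Real.norm_eq_abs]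
      _ ≤ ∑ j', Amax * ‖d k j'‖ := Finset.sum_le_sum fun j' _ =>
          mul_le_mul_of_nonneg_right (hAe i j') (norm_nonneg _)
      _ = Amax * ε k := by rw [hεd, Finset.mul_sum]
  have hdeq : ∀ k, d k = x (k+1) - x k := fun k => rfl
  have hgdiff : ∀ k j', ‖g (x k) j' - g (x (k+1)) j'‖ ≤ (m : ℝ) * (Amax^2 * ε k) := by
    intro k j'
    have hgc : g (x k) j' - g (x (k+1)) j'
        = ∑ i, A i j' • (matVec A (x k) i - matVec A (x (k+1)) i) := by
      simp only [hgd, matVecT]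
      rw [← Finset.sum_sub_distrib]
      refine Finset.sum_congr rfl fun i _ => ?_
      rw [← smul_sub]
      congr 1
      simp only [Pi.sub_apply]
      abel
    have hterm : ∀ i, ‖matVec A (x k) i - matVec A (x (k+1)) i‖ ≤ Amax * ε k := by
      intro i
      have : matVec A (x k) i - matVec A (x (k+1)) i = - matVec A (d k) i := by
        rw [hdeq, matVec_sub]
        simp only [Pi.sub_apply]
        abel
      rw [this, norm_neg]
      exact hAv k i
    calc ‖g (x k) j' - g (x (k+1)) j'‖
        = ‖∑ i, A i j' • (matVec A (x k) i - matVec A (x (k+1)) i)‖ := by rw [hgc]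
      _ ≤ ∑ i, ‖A i j' • (matVec A (x k) i - matVec A (x (k+1)) i)‖ := norm_sum_le _ _
      _ ≤ ∑ _i : Fin m, Amax * (Amax * ε k) := by
          refine Finset.sum_le_sum fun i _ => ?_
          rw [norm_smul, Real.norm_eq_abs]
          exact mul_le_mul (hAe i j') (hterm i) (norm_nonneg _) hAmax0.le
      _ = (m : ℝ) * (Amax^2 * ε k) := by
          rw [Finset.sum_const, Finset.card_univ, Fintype.card_fin, nsmul_eq_mul]
          ring
  -- gap bound
  set C5 : ℝ := (C2 + τ * ((N:ℝ) * (C2 * ((m:ℝ) * Amax^2)))) / τ with hC5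
  have hgap : ∀ k, F (x (k+1)) - F xstar ≤ C5 * ε k := by
    intro k
    have hp := hproxZ k xstar
    have e1 : ∀ j', x (k+1) j' - y k j' = d k j' + τ • g (x k) j' := by
      intro j'
      simp only [hyd, hdd]
      abel
    have eexp : ∀ j', ‖xstar j' - y k j'‖^2 = ‖xstar j' - x (k+1) j'‖^2
        + 2 * ⟪xstar j' - x (k+1) j', d k j' + τ • g (x k) j'⟫
        + ‖x (k+1) j' - y k j'‖^2 := by
      intro j'
      rw [norm_sub_expand (xstar j') (x (k+1) j') (y k j'), e1 j']
    simp only [eexp] at hp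
    rw [Finset.sum_add_distrib, Finset.sum_add_distrib] at hp
    -- cancel quadratic terms
    have hineq1 : τ * mnorm1 (x (k+1)) ≤ τ * mnorm1 xstar
        + ∑ j', ⟪xstar j' - x (k+1) j', d k j' + τ • g (x k) j'⟫ := by
      have hs2 : ∑ j', 2 * ⟪xstar j' - x (k+1) j', d k j' + τ • g (x k) j'⟫
          = 2 * ∑ j', ⟪xstar j' - x (k+1) j', d k j' + τ • g (x k) j'⟫ := by
        rw [Finset.mul_sum]
      rw [hs2] at hp
      linarith
    -- convexity of f
    have hconv : τ * f (x (k+1)) ≤ τ * f xstar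
        - τ * ∑ j', ⟪xstar j' - x (k+1) j', g (x (k+1)) j'⟫ := by
      have := hfe (x (k+1)) xstar
      have hq : 0 ≤ (1/2) * ∑ i, ‖matVec A (xstar - x (k+1)) i‖^2 :=
        mul_nonneg (by norm_num) (Finset.sum_nonneg fun i _ => sq_nonneg _)
      nlinarith [hτ0]
    -- combine
    have hid : ∀ a b cc e : V, ⟪a, b + τ • cc⟫ - τ * ⟪a, e⟫
        = ⟪a, b⟫ + τ * ⟪a, cc - e⟫ := by
      intro a b cc e
      rw [inner_add_right, real_inner_smul_right, inner_sub_right]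
      ring
    have hsum1 : ∑ j', ⟪xstar j' - x (k+1) j', d k j'⟫ ≤ C2 * ε k := by
      calc ∑ j', ⟪xstar j' - x (k+1) j', d k j'⟫
          ≤ ∑ j', C2 * ‖d k j'‖ := by
            refine Finset.sum_le_sum fun j' _ => ?_
            calc ⟪xstar j' - x (k+1) j', d k j'⟫
                ≤ ‖xstar j' - x (k+1) j'‖ * ‖d k j'‖ := real_inner_le_norm _ _
              _ ≤ C2 * ‖d k j'‖ :=
                  mul_le_mul_of_nonneg_right (hbnd k j') (norm_nonneg _)
        _ = C2 * ε k := by rw [hεd, Finset.mul_sum]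
    have hsum2 : ∑ j', ⟪xstar j' - x (k+1) j', g (x k) j' - g (x (k+1)) j'⟫
        ≤ (N : ℝ) * (C2 * ((m:ℝ) * Amax^2 * ε k)) := by
      calc ∑ j', ⟪xstar j' - x (k+1) j', g (x k) j' - g (x (k+1)) j'⟫
          ≤ ∑ _j' : Fin N, C2 * ((m:ℝ) * Amax^2 * ε k) := by
            refine Finset.sum_le_sum fun j' _ => ?_
            calc ⟪xstar j' - x (k+1) j', g (x k) j' - g (x (k+1)) j'⟫
                ≤ ‖xstar j' - x (k+1) j'‖ * ‖g (x k) j' - g (x (k+1)) j'‖ :=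
                  real_inner_le_norm _ _
              _ ≤ C2 * ((m:ℝ) * Amax^2 * ε k) := by
                  have hb := hbnd k j'
                  have hgd' := hgdiff k j'
                  have hnn : (0:ℝ) ≤ ‖g (x k) j' - g (x (k+1)) j'‖ := norm_nonneg _
                  have hC20 : (0:ℝ) ≤ C2 := le_trans (norm_nonneg _) (hbnd k j')
                  calc ‖xstar j' - x (k+1) j'‖ * ‖g (x k) j' - g (x (k+1)) j'‖
                      ≤ C2 * ‖g (x k) j' - g (x (k+1)) j'‖ :=
                        mul_le_mul_of_nonneg_right hb hnn
                    _ ≤ C2 * ((m:ℝ) * Amax^2 * ε k) := by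
                        refine mul_le_mul_of_nonneg_left ?_ hC20
                        calc ‖g (x k) j' - g (x (k+1)) j'‖
                            ≤ (m : ℝ) * (Amax^2 * ε k) := hgd'
                          _ = (m:ℝ) * Amax^2 * ε k := by ring
          _ = (N : ℝ) * (C2 * ((m:ℝ) * Amax^2 * ε k)) := by
            simp [Finset.sum_const, Finset.card_univ]
    have htot : τ * (F (x (k+1)) - F xstar)
        ≤ C2 * ε k + τ * ((N : ℝ) * (C2 * ((m:ℝ) * Amax^2 * ε k))) := by
      have hsumsplit : ∑ j', ⟪xstar j' - x (k+1) j', d k j' + τ • g (x k) j'⟫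
          - τ * ∑ j', ⟪xstar j' - x (k+1) j', g (x (k+1)) j'⟫
          = ∑ j', ⟪xstar j' - x (k+1) j', d k j'⟫
            + τ * ∑ j', ⟪xstar j' - x (k+1) j', g (x k) j' - g (x (k+1)) j'⟫ := by
        rw [Finset.mul_sum, Finset.mul_sum, ← Finset.sum_sub_distrib,
          ← Finset.sum_add_distrib]
        exact Finset.sum_congr rfl fun j' _ => hid _ _ _ _
      have hmul : τ * ∑ j', ⟪xstar j' - x (k+1) j', g (x k) j' - g (x (k+1)) j'⟫
          ≤ τ * ((N : ℝ) * (C2 * ((m:ℝ) * Amax^2 * ε k))) :=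
        mul_le_mul_of_nonneg_left hsum2 hτ0.le
      simp only [hFd]
      linarith
    have hC5e : C5 * ε k = (C2 * ε k + τ * ((N : ℝ) * (C2 * ((m:ℝ) * Amax^2 * ε k)))) / τ := by
      rw [hC5]
      field_simp
    rw [hC5e]
    rw [le_div_iff₀ hτ0]
    linarith
  -- the gap tends to zero
  set gap : ℕ → ℝ := fun k => F (x (k+1)) - F xstar with hgapd
  have hgap0 : ∀ k, 0 ≤ gap k := fun k => by
    have := hmin' (x (k+1)); simp only [hgapd]; linarith
  have hgapto : Filter.Tendsto gap atTop (nhds 0) := by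
    refine squeeze_zero hgap0 (fun k => hgap k) ?_
    simpa using hεto.const_mul C5
  -- component j of the iterates tends to zero
  have hxjto : Filter.Tendsto (fun k => x (k+1) j) atTop (nhds 0) := by
    rw [tendsto_zero_iff_norm_tendsto_zero]
    have hub : ∀ k, ‖x (k+1) j‖ ≤ gap k / (1 - ‖gs j‖) := by
      intro k
      rw [le_div_iff₀ (by linarith : (0:ℝ) < 1 - ‖gs j‖), mul_comm]
      exact (hEB (x (k+1))).2.1
    refine squeeze_zero (fun k => norm_nonneg _) hub ?_
    have := hgapto.div_const (1 - ‖gs j‖)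
    simpa using this
  -- the image under A converges
  have hAxi : ∀ i, Filter.Tendsto (fun k => matVec A (x (k+1)) i) atTop
      (nhds (matVec A xstar i)) := by
    intro i
    rw [tendsto_iff_norm_sub_tendsto_zero]
    have hub : ∀ k, ‖matVec A (x (k+1)) i - matVec A xstar i‖ ≤ Real.sqrt (2 * gap k) := by
      intro k
      have hsq : ‖matVec A (x (k+1)) i - matVec A xstar i‖^2 ≤ 2 * gap k := by
        have h1 : ‖matVec A (x (k+1) - xstar) i‖^2
            ≤ ∑ i', ‖matVec A (x (k+1) - xstar) i'‖^2 :=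
          Finset.single_le_sum (f := fun i' => ‖matVec A (x (k+1) - xstar) i'‖^2)
            (fun i' _ => sq_nonneg _) (Finset.mem_univ i)
        have h2 : matVec A (x (k+1) - xstar) i = matVec A (x (k+1)) i - matVec A xstar i := by
          rw [matVec_sub]
          rfl
        rw [← h2]
        exact le_trans h1 (hEB (x (k+1))).2.2
      calc ‖matVec A (x (k+1)) i - matVec A xstar i‖
          = Real.sqrt (‖matVec A (x (k+1)) i - matVec A xstar i‖^2) := by
            rw [Real.sqrt_sq (norm_nonneg _)]
        _ ≤ Real.sqrt (2 * gap k) := Real.sqrt_le_sqrt hsq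
    have h2g : Filter.Tendsto (fun k => 2 * gap k) atTop (nhds 0) := by
      simpa using hgapto.const_mul 2
    have hsq2 : Filter.Tendsto (fun k => Real.sqrt (2 * gap k)) atTop (nhds 0) := by
      have h := (Real.continuous_sqrt.tendsto 0).comp h2g
      rw [Real.sqrt_zero] at h
      exact h
    exact squeeze_zero (fun k => norm_nonneg _) hub hsq2
  -- the gradient at the iterates converges
  have hgto : Filter.Tendsto (fun k => g (x (k+1)) j) atTop (nhds (- gs j)) := by
    have hsum : Filter.Tendsto (fun k => ∑ i, A i j • (matVec A (x (k+1)) i - u i)) atTop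
        (nhds (∑ i, A i j • (matVec A xstar i - u i))) := by
      refine tendsto_finset_sum _ fun i _ => ?_
      exact ((hAxi i).sub tendsto_const_nhds).const_smul (A i j)
    have hlim : ∑ i, A i j • (matVec A xstar i - u i) = - gs j := by
      have h1 : - gs j = g xstar j := by rw [hgs_g j, neg_neg]
      rw [h1]
      rfl
    have hfun : ∀ k, g (x (k+1)) j = ∑ i, A i j • (matVec A (x (k+1)) i - u i) := fun k => rfl
    rw [← hlim]
    simpa only [← hfun] using hsum
  -- hence the soft-threshold argument converges to τ • gs j
  have hyto : Filter.Tendsto (fun k => y (k+1) j) atTop (nhds (τ • gs j)) := by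
    have h := hxjto.sub (hgto.const_smul τ)
    have hfun : ∀ k, x (k+1) j - τ • g (x (k+1)) j = y (k+1) j := fun k => rfl
    have hval : (0 : V) - τ • (- gs j) = τ • gs j := by
      rw [smul_neg]
      abel
    rw [hval] at h
    simpa only [hfun] using h
  have hnto : Filter.Tendsto (fun k => ‖y (k+1) j‖) atTop (nhds ‖τ • gs j‖) := hyto.norm
  have hlt : ‖τ • gs j‖ < τ := by
    rw [norm_smul, Real.norm_eq_abs, abs_of_pos hτ0]
    nlinarith [hgj, norm_nonneg (gs j)]
  have hev := hnto.eventually_lt_const hlt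
  obtain ⟨K, hK⟩ := eventually_atTop.mp hev
  refine ⟨K + 2, fun k hk => ?_⟩
  obtain ⟨n, rfl⟩ : ∃ n, k = n + 2 := ⟨k - 2, by omega⟩
  have hn : n ≥ K := by omega
  have hxn : x (n + 2) j = softThresh τ (y (n+1) j) := hx1 (n+1) j
  rw [hxn]
  exact softThresh_of_le (le_of_lt (hK n hn))
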